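/- arXiv:2508.10153 — 2 statements merged into one kernel-verified Lean document; each statement's English description precedes it below -/
import Mathlib

section
/- Let A, B ∈ F₂[[q]] be odd and let n be a positive integer. For every function p : {0,1,…,n−1} → F₂ there exists a ∈ F₂[[q]] such that the parity of T_{A,B}^k(a) equals p(k) for all k < n; moreover, a is unique modulo q^n (any two such elements are congruent mod q^n). Equivalently, the induced map from F₂[[q]]/(q^n) to the set of parity sequences of length n is a bijection. -/
open PowerSeries
open scoped Classical

/-- Shift map on `F₂[[q]]`: equals `x / q` whenever `q ∣ x`. -/
noncomputable def divq (x : PowerSeries (ZMod 2)) : PowerSeries (ZMod 2) :=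
  PowerSeries.mk fun n => PowerSeries.coeff (n + 1) x

/-- `T_{A,B}(x) = x/q` if `q ∣ x`, and `(A*x + B)/q` otherwise.  (When `A`, `B`, `x` are
all odd, `A*x + B` is divisible by `q`, so `divq` computes the true quotient there.) -/
noncomputable def Tab (A B x : PowerSeries (ZMod 2)) : PowerSeries (ZMod 2) :=
  if X ∣ x then divq x else divq (A * x + B)

lemma divq_X_mul (a : PowerSeries (ZMod 2)) : divq (X * a) = a := by
  ext k
  simp [divq, PowerSeries.coeff_succ_X_mul]

lemma eq_X_mul_divq (x : PowerSeries (ZMod 2)) :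
    x = X * divq x + PowerSeries.C (PowerSeries.constantCoeff x) := by
  ext k
  cases k with
  | zero => simp [divq]
  | succ m => simp [divq, PowerSeries.coeff_succ_X_mul, PowerSeries.coeff_C]

lemma zmod2_cases (c : ZMod 2) : c = 0 ∨ c = 1 := by revert c; decide

/-- one-step existence -/
lemma Tab_exists_step (A B : PowerSeries (ZMod 2))
    (hA : PowerSeries.constantCoeff A = 1)
    (hB : PowerSeries.constantCoeff B = 1)
    (p0 : ZMod 2) (a' : PowerSeries (ZMod 2)) :
    ∃ a, PowerSeries.constantCoeff a = p0 ∧ Tab A B a = a' := by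
  rcases zmod2_cases p0 with h0 | h1
  · refine ⟨X * a', ?_, ?_⟩
    · simp [h0]
    · rw [Tab, if_pos ⟨a', rfl⟩, divq_X_mul]
  · have hAne : PowerSeries.constantCoeff A ≠ 0 := by rw [hA]; decide
    refine ⟨A⁻¹ * (X * a' + B), ?_, ?_⟩
    · simp [PowerSeries.constantCoeff_inv, hA, hB, h1]
    · have hcc : PowerSeries.constantCoeff (A⁻¹ * (X * a' + B)) = 1 := by
        simp [PowerSeries.constantCoeff_inv, hA, hB]
      rw [Tab, if_neg (by rw [PowerSeries.X_dvd_iff, hcc]; decide)]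
      have hBB : B + B = 0 := by ext k; simp [CharTwo.add_self_eq_zero]
      have : A * (A⁻¹ * (X * a' + B)) + B = X * a' := by
        rw [← mul_assoc, PowerSeries.mul_inv_cancel _ hAne, one_mul, add_assoc, hBB,
          add_zero]
      rw [this, divq_X_mul]

/-- For odd `A, B` and `n > 0`: every length-`n` parity sequence is realized by some
`a ∈ F₂[[q]]`, and the realizing element is unique modulo `q^n`; i.e., the induced map
from `F₂[[q]]/(q^n)` to parity sequences of length `n` is a bijection. -/
theorem Tab_parity_sequences_bijective (A B : PowerSeries (ZMod 2))
    (hA : PowerSeries.constantCoeff A = 1)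
    (hB : PowerSeries.constantCoeff B = 1)
    (n : ℕ) (hn : 0 < n) :
    (∀ p : Fin n → ZMod 2, ∃ a : PowerSeries (ZMod 2),
        ∀ k : Fin n, PowerSeries.constantCoeff ((Tab A B)^[k] a) = p k) ∧
    (∀ a b : PowerSeries (ZMod 2),
        (∀ k < n, PowerSeries.constantCoeff ((Tab A B)^[k] a) =
          PowerSeries.constantCoeff ((Tab A B)^[k] b)) →
        X ^ n ∣ a - b) := by
  clear hn
  constructor
  · induction n with
    | zero => intro p; exact ⟨0, fun k => k.elim0⟩
    | succ m ih =>
      intro p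
      obtain ⟨a', ha'⟩ := ih (fun j => p j.succ)
      obtain ⟨a, hcc, hT⟩ := Tab_exists_step A B hA hB (p 0) a'
      refine ⟨a, fun k => ?_⟩
      rcases Fin.eq_zero_or_eq_succ k with rfl | ⟨j, rfl⟩
      · simpa using hcc
      · have : (Tab A B)^[(j.succ : ℕ)] a = (Tab A B)^[(j : ℕ)] a' := by
          rw [Fin.val_succ, Function.iterate_succ_apply, hT]
        rw [this]; exact ha' j
  · induction n with
    | zero => intro a b _; simpa using dvd_refl (1 : PowerSeries (ZMod 2))
    | succ m ih =>
      intro a b h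
      have h0 := h 0 (Nat.succ_pos m)
      simp only [Function.iterate_zero_apply] at h0
      have hd : X ^ m ∣ Tab A B a - Tab A B b := by
        apply ih
        intro k hk
        have := h (k + 1) (Nat.succ_lt_succ hk)
        simpa [Function.iterate_succ_apply] using this
      rcases zmod2_cases (PowerSeries.constantCoeff a) with hc | hc
      · -- both even
        have hcb : PowerSeries.constantCoeff b = 0 := by rw [← h0]; exact hc
        have hxa : X ∣ a := PowerSeries.X_dvd_iff.2 hc
        have hxb : X ∣ b := PowerSeries.X_dvd_iff.2 hcb
        have ea : a = X * Tab A B a := by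
          rw [Tab, if_pos hxa]
          conv_lhs => rw [eq_X_mul_divq a]
          rw [hc, map_zero, add_zero]
        have eb : b = X * Tab A B b := by
          rw [Tab, if_pos hxb]
          conv_lhs => rw [eq_X_mul_divq b]
          rw [hcb, map_zero, add_zero]
        have key : a - b = X * (Tab A B a - Tab A B b) := by
          conv_lhs => rw [ea, eb]
          ring
        rw [key, pow_succ, mul_comm (X ^ m) X]
        exact mul_dvd_mul_left X hd
      · -- both odd
        have hcb : PowerSeries.constantCoeff b = 1 := by rw [← h0]; exact hc
        have hxa : ¬ X ∣ a := by rw [PowerSeries.X_dvd_iff, hc]; decide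
        have hxb : ¬ X ∣ b := by rw [PowerSeries.X_dvd_iff, hcb]; decide
        have ha2 : PowerSeries.constantCoeff (A * a + B) = 0 := by
          rw [map_add, map_mul, hA, hc, hB]; decide
        have hb2 : PowerSeries.constantCoeff (A * b + B) = 0 := by
          rw [map_add, map_mul, hA, hcb, hB]; decide
        have ea : A * a + B = X * Tab A B a := by
          rw [Tab, if_neg hxa]
          conv_lhs => rw [eq_X_mul_divq (A * a + B)]
          rw [ha2, map_zero, add_zero]
        have eb : A * b + B = X * Tab A B b := by
          rw [Tab, if_neg hxb]
          conv_lhs => rw [eq_X_mul_divq (A * b + B)]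
          rw [hb2, map_zero, add_zero]
        have key : A * (a - b) = X * (Tab A B a - Tab A B b) := by
          linear_combination ea - eb
        have hdvd : X ^ (m + 1) ∣ A * (a - b) := by
          rw [key, pow_succ, mul_comm (X ^ m) X]
          exact mul_dvd_mul_left X hd
        have hAne : PowerSeries.constantCoeff A ≠ 0 := by rw [hA]; decide
        have : a - b = A⁻¹ * (A * (a - b)) := by
          rw [← mul_assoc, mul_comm A⁻¹ A, PowerSeries.mul_inv_cancel _ hAne, one_mul]
        rw [this]
        exact hdvd.mul_left A⁻¹
end

section
/- Let A, B ∈ F₂[[q]] be odd. If a, b ∈ F₂[[q]] satisfy that T_{A,B}^k(a) and T_{A,B}^k(b) have the same parity for every k ∈ ℕ, then a = b. (The parity vector map PV_{A,B} is injective.) -/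
open PowerSeries
open scoped Classical

lemma coeff_divq (n : ℕ) (x : PowerSeries (ZMod 2)) :
    PowerSeries.coeff n (divq x) = PowerSeries.coeff (n + 1) x := by
  simp [divq]

lemma divq_add (x y : PowerSeries (ZMod 2)) : divq (x + y) = divq x + divq y := by
  ext n; simp [coeff_divq]

lemma add_self_ps (x : PowerSeries (ZMod 2)) : x + x = 0 := by
  ext n; simp [CharTwo.add_self_eq_zero]

lemma Tab_add_Tab (A B : PowerSeries (ZMod 2))
    (hA : PowerSeries.constantCoeff A = 1)
    (u v : PowerSeries (ZMod 2))
    (hpar : PowerSeries.constantCoeff u = PowerSeries.constantCoeff v) :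
    ∃ c, PowerSeries.constantCoeff c = 1 ∧
      Tab A B u + Tab A B v = divq (c * (u + v)) := by
  by_cases hu : X ∣ u
  · have hv : X ∣ v := by
      rw [PowerSeries.X_dvd_iff] at hu ⊢; rw [← hpar]; exact hu
    exact ⟨1, by simp, by simp [Tab, hu, hv, divq_add]⟩
  · have hv : ¬ X ∣ v := by
      rw [PowerSeries.X_dvd_iff] at hu ⊢; rw [← hpar]; exact hu
    refine ⟨A, hA, ?_⟩
    rw [Tab, Tab, if_neg hu, if_neg hv, ← divq_add]
    congr 1
    have : A * u + B + (A * v + B) = A * (u + v) + (B + B) := by ring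
    rw [this, add_self_ps, add_zero]

/-- For odd `A, B`: if the parities of `T_{A,B}^k(a)` and `T_{A,B}^k(b)` agree for every
`k`, then `a = b` (the parity vector map is injective). -/
theorem Tab_parity_vector_injective (A B : PowerSeries (ZMod 2))
    (hA : PowerSeries.constantCoeff A = 1)
    (hB : PowerSeries.constantCoeff B = 1)
    (a b : PowerSeries (ZMod 2))
    (h : ∀ k : ℕ, PowerSeries.constantCoeff ((Tab A B)^[k] a) =
      PowerSeries.constantCoeff ((Tab A B)^[k] b)) :
    a = b := by
  have key : ∀ n, ∀ k, PowerSeries.coeff n ((Tab A B)^[k] a + (Tab A B)^[k] b) = 0 := by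
    intro n
    induction n using Nat.strong_induction_on with
    | _ n IH =>
      intro k
      match n with
      | 0 =>
        rw [PowerSeries.coeff_zero_eq_constantCoeff, map_add, h k, CharTwo.add_self_eq_zero]
      | m + 1 =>
        obtain ⟨c, hc, hstep⟩ :=
          Tab_add_Tab A B hA ((Tab A B)^[k] a) ((Tab A B)^[k] b) (h k)
        have h1 : PowerSeries.coeff m
            ((Tab A B)^[k+1] a + (Tab A B)^[k+1] b) = 0 :=
          IH m (Nat.lt_succ_self m) (k + 1)
        rw [Function.iterate_succ_apply', Function.iterate_succ_apply', hstep, coeff_divq,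
          PowerSeries.coeff_mul] at h1
        rw [Finset.sum_eq_single (0, m + 1)] at h1
        · simpa [hc] using h1
        · intro p hp hne
          have hpe := Finset.HasAntidiagonal.mem_antidiagonal.mp hp
          have hlt : p.2 < m + 1 := by
            rcases Nat.lt_or_ge p.2 (m + 1) with h' | h'
            · exact h'
            · exfalso; apply hne
              have h2 : p.2 = m + 1 := by omega
              have h1' : p.1 = 0 := by omega
              exact Prod.ext h1' h2
          rw [IH p.2 hlt k, mul_zero]
        · intro hnot
          exact absurd (Finset.HasAntidiagonal.mem_antidiagonal.mpr (by simp)) hnot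
  ext n
  have hk := key n 0
  simp only [Function.iterate_zero, id_eq, map_add] at hk
  have := eq_neg_of_add_eq_zero_left hk
  simpa [CharTwo.neg_eq] using this
end
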